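/- arXiv:1908.01657 — 7 statements merged into one kernel-verified Lean document; each statement's English description precedes it below -/
import Mathlib

section
/- For every m ∈ ℕ, the complete bipartite graph K_{2m+1,2m+1} is equitably 2m-colorable. -/
open SimpleGraph

attribute [local instance] Classical.propDecidable

/-- `G` is equitably `k`-colorable: it has a proper `k`-coloring in which the sizes of any
two color classes differ by at most one. -/
def EquitablyColorable {V : Type} [Fintype V] (G : SimpleGraph V) (k : ℕ) : Prop :=
  ∃ f : V → Fin k, (∀ u v, G.Adj u v → f u ≠ f v) ∧
    ∀ i j : Fin k, (Finset.univ.filter fun v => f v = i).card ≤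
      (Finset.univ.filter fun v => f v = j).card + 1

lemma card_filter_sum {α β : Type} [Fintype α] [Fintype β] (p : α ⊕ β → Prop)
    [DecidablePred p] [DecidablePred fun a => p (Sum.inl a)]
    [DecidablePred fun b => p (Sum.inr b)] :
    (Finset.univ.filter p).card =
      (Finset.univ.filter fun a => p (Sum.inl a)).card +
      (Finset.univ.filter fun b => p (Sum.inr b)).card := by
  rw [← Finset.card_disjSum]
  congr 1
  ext x
  cases x <;> simp [Finset.mem_disjSum]

lemma card_filter_div2 (m : ℕ) (hm : 1 ≤ m) (r : ℕ) (hr : r < m) :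
    2 ≤ (Finset.univ.filter fun x : Fin (2 * m + 1) => min (x.1 / 2) (m - 1) = r).card ∧
    (Finset.univ.filter fun x : Fin (2 * m + 1) => min (x.1 / 2) (m - 1) = r).card ≤ 3 := by
  classical
  by_cases h : r = m - 1
  · have : (Finset.univ.filter fun x : Fin (2 * m + 1) => min (x.1 / 2) (m - 1) = r)
        = {⟨2 * m - 2, by omega⟩, ⟨2 * m - 1, by omega⟩, ⟨2 * m, by omega⟩} := by
      ext x
      simp only [Finset.mem_filter, Finset.mem_univ, true_and, Finset.mem_insert,
        Finset.mem_singleton, Fin.ext_iff]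
      omega
    rw [this]
    constructor
    · refine le_trans ?_ (Finset.card_le_card (Finset.subset_insert _ _))
      rw [Finset.card_insert_of_notMem (by simp [Fin.ext_iff]; omega),
        Finset.card_singleton]
    · exact le_trans (Finset.card_insert_le _ _)
        (Nat.succ_le_succ (le_trans (Finset.card_insert_le _ _) (by simp)))
  · have : (Finset.univ.filter fun x : Fin (2 * m + 1) => min (x.1 / 2) (m - 1) = r)
        = {⟨2 * r, by omega⟩, ⟨2 * r + 1, by omega⟩} := by
      ext x
      simp only [Finset.mem_filter, Finset.mem_univ, true_and, Finset.mem_insert,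
        Finset.mem_singleton, Fin.ext_iff]
      omega
    rw [this, Finset.card_insert_of_notMem (by simp [Fin.ext_iff]),
      Finset.card_singleton]
    omega

def myColor (m : ℕ) (hm : 1 ≤ m) : Fin (2*m+1) ⊕ Fin (2*m+1) → Fin (2*m) :=
  Sum.elim (fun x => ⟨min (x.1 / 2) (m - 1), by omega⟩)
    (fun y => ⟨m + min (y.1 / 2) (m - 1), by omega⟩)

theorem completeBipartite_equitably_colorable (m : ℕ) (hm : 1 ≤ m) :
    EquitablyColorable
      (completeBipartiteGraph (Fin (2 * m + 1)) (Fin (2 * m + 1))) (2 * m) := by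
  classical
  refine ⟨myColor m hm, ?_, ?_⟩
  · rintro (u | u) (v | v) hadj <;> simp_all [completeBipartiteGraph, myColor, Fin.ext_iff] <;> omega
  · intro i j
    have key : ∀ i : Fin (2 * m),
        2 ≤ (Finset.univ.filter fun v : Fin (2*m+1) ⊕ Fin (2*m+1) => myColor m hm v = i).card ∧
        (Finset.univ.filter fun v : Fin (2*m+1) ⊕ Fin (2*m+1) => myColor m hm v = i).card ≤ 3 := by
      intro i
      rw [card_filter_sum]
      by_cases hi : i.1 < m
      · have h1 : (Finset.univ.filter fun a : Fin (2*m+1) =>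
            myColor m hm (Sum.inl a) = i)
            = Finset.univ.filter fun x : Fin (2*m+1) => min (x.1 / 2) (m - 1) = i.1 := by
          ext x; simp [myColor, Fin.ext_iff]
        have h2 : (Finset.univ.filter fun b : Fin (2*m+1) =>
            myColor m hm (Sum.inr b) = i)
            = ∅ := by
          ext x; simp [myColor, Fin.ext_iff]; omega
        rw [h1, h2]
        have := card_filter_div2 m hm i.1 hi
        simp only [Finset.card_empty]
        omega
      · have h1 : (Finset.univ.filter fun a : Fin (2*m+1) =>
            myColor m hm (Sum.inl a) = i)
            = ∅ := by
          ext x; simp [myColor, Fin.ext_iff]; omega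
        have h2 : (Finset.univ.filter fun b : Fin (2*m+1) =>
            myColor m hm (Sum.inr b) = i)
            = Finset.univ.filter fun x : Fin (2*m+1) => min (x.1 / 2) (m - 1) = i.1 - m := by
          ext x; simp [myColor, Fin.ext_iff]; omega
        rw [h1, h2]
        have := card_filter_div2 m hm (i.1 - m) (by omega)
        simp only [Finset.card_empty]
        omega
    have k1 := key i
    have k2 := key j
    omega
end

section
/- The star K_{1,9} is equitably 4-choosable but not equitably 5-choosable. -/
open SimpleGraph

attribute [local instance] Classical.propDecidable

/-- `f` is an equitable `L`-coloring of `G` for the `k`-assignment `L`: a proper coloring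
from the lists in which each color is used at most `⌈|V(G)|/k⌉` times. -/
def IsEquitableLColoring {V α : Type} [Fintype V] (G : SimpleGraph V) (k : ℕ)
    (L : V → Finset α) (f : V → α) : Prop :=
  (∀ v, f v ∈ L v) ∧ (∀ u v, G.Adj u v → f u ≠ f v) ∧
    ∀ c : α, (Finset.univ.filter fun v => f v = c).card ≤ (Fintype.card V + k - 1) / k

/-- `G` is equitably `k`-choosable: equitably `L`-colorable for every `k`-assignment `L`. -/
def EquitablyChoosable {V : Type} [Fintype V] (G : SimpleGraph V) (k : ℕ) : Prop :=
  ∀ (α : Type) (L : V → Finset α), (∀ v, (L v).card = k) →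
    ∃ f : V → α, IsEquitableLColoring G k L f

theorem star_1_9_equitable_choosability :
    EquitablyChoosable (completeBipartiteGraph (Fin 1) (Fin 9)) 4 ∧
    ¬ EquitablyChoosable (completeBipartiteGraph (Fin 1) (Fin 9)) 5 := by
  classical
  have hcard : Fintype.card (Fin 1 ⊕ Fin 9) = 10 := by simp
  constructor
  · -- equitably 4-choosable
    intro α L hL
    -- choose center color
    have hc0 : (L (Sum.inl 0)).Nonempty := by
      rw [← Finset.card_pos, hL]; norm_num
    obtain ⟨c, hc⟩ := hc0
    -- lists for leaves, blown up with multiplicity 3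
    set t : Fin 9 → Finset (α × Fin 3) :=
      fun j => ((L (Sum.inr j)).erase c) ×ˢ Finset.univ with ht
    have htcard : ∀ j, 9 ≤ (t j).card := by
      intro j
      have h1 : 3 ≤ ((L (Sum.inr j)).erase c).card := by
        have := Finset.pred_card_le_card_erase (s := L (Sum.inr j)) (a := c)
        rw [hL] at this
        omega
      rw [ht]
      simp only [Finset.card_product, Finset.card_univ, Fintype.card_fin]
      omega
    have hall : ∀ s : Finset (Fin 9), s.card ≤ (s.biUnion t).card := by
      intro s
      rcases s.eq_empty_or_nonempty with rfl | ⟨j, hj⟩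
      · simp
      · calc s.card ≤ Fintype.card (Fin 9) := s.card_le_univ.trans_eq (by simp)
          _ = 9 := by simp
          _ ≤ (t j).card := htcard j
          _ ≤ (s.biUnion t).card :=
            Finset.card_le_card (Finset.subset_biUnion_of_mem t hj)
    obtain ⟨g, hginj, hgmem⟩ := (Finset.all_card_le_biUnion_card_iff_exists_injective t).mp hall
    have hg1 : ∀ j, (g j).1 ∈ (L (Sum.inr j)).erase c := fun j =>
      (Finset.mem_product.mp (hgmem j)).1
    refine ⟨Sum.elim (fun _ => c) (fun j => (g j).1), ?_, ?_, ?_⟩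
    · rintro (i | j)
      · rw [Subsingleton.elim i (0 : Fin 1)]; simpa using hc
      · exact Finset.mem_of_mem_erase (hg1 j)
    · rintro (i | j) (i' | j') hadj
      · simp [completeBipartiteGraph] at hadj
      · exact fun h => (Finset.ne_of_mem_erase (hg1 j')) h.symm
      · exact fun h => (Finset.ne_of_mem_erase (hg1 j)) h
      · simp [completeBipartiteGraph] at hadj
    · intro a
      have hbound : ((Finset.univ.filter
          fun v : Fin 1 ⊕ Fin 9 => Sum.elim (fun _ => c) (fun j => (g j).1) v = a)).card ≤ 3 := by
        by_cases hac : a = c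
        · have hsub : (Finset.univ.filter
              fun v : Fin 1 ⊕ Fin 9 => Sum.elim (fun _ => c) (fun j => (g j).1) v = a)
              ⊆ {Sum.inl 0} := by
            intro v hv
            simp only [Finset.mem_filter] at hv
            rcases v with i | j
            · simp [Subsingleton.elim i (0 : Fin 1)]
            · exact absurd (hv.2.trans hac) (Finset.ne_of_mem_erase (hg1 j))
          exact (Finset.card_le_card hsub).trans (by simp)
        · -- leaves only; count via injectivity into Fin 3
          have hsub : (Finset.univ.filter
              fun v : Fin 1 ⊕ Fin 9 => Sum.elim (fun _ => c) (fun j => (g j).1) v = a)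
              ⊆ (Finset.univ.filter fun j : Fin 9 => (g j).1 = a).image Sum.inr := by
            intro v hv
            simp only [Finset.mem_filter] at hv
            rcases v with i | j
            · exact absurd hv.2 fun h => hac h.symm
            · simp only [Finset.mem_image, Finset.mem_filter]
              exact ⟨j, ⟨Finset.mem_univ j, hv.2⟩, rfl⟩
          have hS : (Finset.univ.filter fun j : Fin 9 => (g j).1 = a).card ≤ 3 := by
            have := Finset.card_le_card_of_injOn (f := fun j : Fin 9 => (g j).2)
              (s := Finset.univ.filter fun j : Fin 9 => (g j).1 = a)
              (t := (Finset.univ : Finset (Fin 3)))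
              (fun j _ => Finset.mem_univ _) ?_
            · simpa using this
            · intro j hj j' hj' hsnd
              simp only [Finset.coe_filter, Set.mem_setOf_eq] at hj hj'
              exact hginj (Prod.ext (hj.2.trans hj'.2.symm) hsnd)
          calc _ ≤ ((Finset.univ.filter fun j : Fin 9 => (g j).1 = a).image Sum.inr).card :=
              Finset.card_le_card hsub
            _ ≤ (Finset.univ.filter fun j : Fin 9 => (g j).1 = a).card :=
              Finset.card_image_le
            _ ≤ 3 := hS
      rw [hcard]
      exact hbound.trans (by norm_num)
  · -- not equitably 5-choosable
    intro h
    obtain ⟨f, hfL, hfadj, hfcnt⟩ := h (Fin 5) (fun _ => Finset.univ) (fun _ => by simp)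
    rw [hcard] at hfcnt
    norm_num at hfcnt
    have hfcnt' : ∀ b : Fin 5,
        (Finset.univ.filter fun v : Fin 1 ⊕ Fin 9 => f v = b).card ≤ 2 := by
      intro b
      have := hfcnt b
      rwa [Finset.filter_congr_decidable] at this
    set c0 := f (Sum.inl 0) with hc0
    have hadj : ∀ j : Fin 9, f (Sum.inl 0) ≠ f (Sum.inr j) := by
      intro j
      exact hfadj _ _ (by simp [completeBipartiteGraph])
    have hfib0 : (Finset.univ.filter fun v : Fin 1 ⊕ Fin 9 => f v = c0).card ≤ 1 := by
      have : (Finset.univ.filter fun v : Fin 1 ⊕ Fin 9 => f v = c0) ⊆ {Sum.inl 0} := by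
        intro v hv
        simp only [Finset.mem_filter] at hv
        rcases v with i | j
        · simp [Subsingleton.elim i 0]
        · exact absurd hv.2.symm (hadj j)
      exact (Finset.card_le_card this).trans (by simp)
    have hsum : (10 : ℕ) = ∑ b : Fin 5,
        (Finset.univ.filter fun v : Fin 1 ⊕ Fin 9 => f v = b).card := by
      rw [← hcard, ← Finset.card_univ]
      exact Finset.card_eq_sum_card_fiberwise (fun x _ => Finset.mem_univ (f x))
    have hsplit := Finset.add_sum_erase Finset.univ
      (fun b => (Finset.univ.filter fun v : Fin 1 ⊕ Fin 9 => f v = b).card)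
      (Finset.mem_univ c0)
    have hrest : ∑ b ∈ Finset.univ.erase c0,
        (Finset.univ.filter fun v : Fin 1 ⊕ Fin 9 => f v = b).card ≤ 8 := by
      calc ∑ b ∈ Finset.univ.erase c0,
          (Finset.univ.filter fun v : Fin 1 ⊕ Fin 9 => f v = b).card
          ≤ ∑ _b ∈ Finset.univ.erase c0, 2 := Finset.sum_le_sum fun b _ => hfcnt' b
        _ = 8 := by simp [Finset.card_erase_of_mem]
    omega
end

section
/- The star K_{1,6} is equitably 3-choosable but not equitably 3-colorable. -/
open SimpleGraph

attribute [local instance] Classical.propDecidable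

noncomputable section GreedyAux

variable {α : Type} (a b : ℕ → α)

/-- The list of greedily chosen colors for indices `n-1, ..., 0`. -/
def gl : ℕ → List α
  | 0 => []
  | n+1 => (if (gl n).count (a n) < 3 then a n else b n) :: gl n

/-- The greedily chosen color for index `n`. -/
def gv (n : ℕ) : α := if (gl a b n).count (a n) < 3 then a n else b n

lemma gl_succ (n : ℕ) : gl a b (n+1) = gv a b n :: gl a b n := rfl

lemma gl_length (n : ℕ) : (gl a b n).length = n := by
  induction n with
  | zero => rfl
  | succ n ih => simp [gl_succ, ih]

lemma gv_mem (n : ℕ) : gv a b n = a n ∨ gv a b n = b n := by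
  unfold gv; split <;> simp

lemma count_two {x y : α} (h : x ≠ y) (l : List α) :
    l.count x + l.count y ≤ l.length := by
  induction l with
  | nil => simp
  | cons z t ih =>
    simp only [List.count_cons, List.length_cons, beq_iff_eq]
    split_ifs with h1 h2
    · simp_all
    all_goals omega

lemma gl_count_le (hab : ∀ n, a n ≠ b n) : ∀ n ≤ 6, ∀ x, (gl a b n).count x ≤ 3 := by
  intro n hn x
  induction n with
  | zero => simp [gl]
  | succ n ih =>
    have ih' := ih (by omega)
    rw [gl_succ, List.count_cons]
    simp only [beq_iff_eq]
    rcases eq_or_ne (gv a b n) x with hx | hx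
    · rw [if_pos hx]
      by_cases hc : (gl a b n).count (a n) < 3
      · have hgv : gv a b n = a n := by unfold gv; rw [if_pos hc]
        rw [← hx, hgv]; omega
      · have hgv : gv a b n = b n := by unfold gv; rw [if_neg hc]
        rw [← hx, hgv]
        have h2 := count_two (hab n) (gl a b n)
        rw [gl_length] at h2
        omega
    · rw [if_neg hx]; simpa using ih'

lemma gl_count_eq (x : α) : ∀ n, (gl a b n).count x =
    ((Finset.range n).filter fun m => gv a b m = x).card := by
  intro n
  induction n with
  | zero => simp [gl]
  | succ n ih =>
    rw [gl_succ, List.count_cons, Finset.range_add_one, Finset.filter_insert]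
    simp only [beq_iff_eq]
    by_cases h : gv a b n = x
    · rw [if_pos h, if_pos h, Finset.card_insert_of_notMem (by simp), ih]
    · rw [if_neg h, if_neg h, ih, Nat.add_zero]

end GreedyAux

theorem star_1_6_choosable_not_colorable :
    EquitablyChoosable (completeBipartiteGraph (Fin 1) (Fin 6)) 3 ∧
    ¬ EquitablyColorable (completeBipartiteGraph (Fin 1) (Fin 6)) 3 := by
  constructor
  · -- equitably 3-choosable
    intro α L hL
    obtain ⟨c, hc⟩ : (L (.inl 0)).Nonempty := by
      rw [← Finset.card_pos, hL]; omega
    have hex : ∀ i : Fin 6, ∃ p q : α,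
        p ∈ L (.inr i) ∧ q ∈ L (.inr i) ∧ p ≠ c ∧ q ≠ c ∧ p ≠ q := by
      intro i
      have h2 : 2 ≤ ((L (.inr i)).erase c).card := by
        have := Finset.pred_card_le_card_erase (s := L (.inr i)) (a := c)
        rw [hL] at this; omega
      obtain ⟨p, hp⟩ : ((L (.inr i)).erase c).Nonempty := by
        rw [← Finset.card_pos]; omega
      obtain ⟨q, hq⟩ : (((L (.inr i)).erase c).erase p).Nonempty := by
        rw [← Finset.card_pos, Finset.card_erase_of_mem hp]; omega
      have hq' := Finset.mem_of_mem_erase hq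
      exact ⟨p, q, Finset.mem_of_mem_erase hp, Finset.mem_of_mem_erase hq',
        (Finset.mem_erase.mp hp).1, (Finset.mem_erase.mp hq').1,
        fun h => (Finset.mem_erase.mp hq).1 h.symm⟩
    choose p q hp hq hpc hqc hpq using hex
    set a : ℕ → α := fun n => p ⟨n % 6, Nat.mod_lt _ (by omega)⟩ with ha
    set b : ℕ → α := fun n => q ⟨n % 6, Nat.mod_lt _ (by omega)⟩ with hb
    have hab : ∀ n, a n ≠ b n := fun n => hpq _
    have hmod : ∀ i : Fin 6, (⟨(i : ℕ) % 6, Nat.mod_lt _ (by omega)⟩ : Fin 6) = i := by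
      intro i; exact Fin.ext (Nat.mod_eq_of_lt i.isLt)
    have hgv_ne : ∀ i : Fin 6, gv a b (i : ℕ) ≠ c := by
      intro i
      rcases gv_mem a b (i : ℕ) with h | h <;> rw [h]
      · exact hpc _
      · exact hqc _
    have hgv_mem : ∀ i : Fin 6, gv a b (i : ℕ) ∈ L (.inr i) := by
      intro i
      rcases gv_mem a b (i : ℕ) with h | h <;> rw [h]
      · show p _ ∈ _; rw [hmod i]; exact hp i
      · show q _ ∈ _; rw [hmod i]; exact hq i
    refine ⟨Sum.elim (fun _ => c) (fun i => gv a b (i : ℕ)), ?_, ?_, ?_⟩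
    · rintro (j | i)
      · have : j = 0 := Subsingleton.elim _ _
        subst this; exact hc
      · exact hgv_mem i
    · rintro (j | i) (j' | i') hadj
      · simp at hadj
      · simp only [Sum.elim_inl, Sum.elim_inr]
        exact fun h => hgv_ne i' h.symm
      · simp only [Sum.elim_inl, Sum.elim_inr]
        exact hgv_ne i
      · simp at hadj
    · intro x
      have hrhs : (Fintype.card (Fin 1 ⊕ Fin 6) + 3 - 1) / 3 = 3 := by
        simp [Fintype.card_sum]
      rw [hrhs, Finset.card_filter, Fintype.sum_sum_type]
      have hsum2 : (∑ i : Fin 6, if Sum.elim (fun _ : Fin 1 => c)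
          (fun i : Fin 6 => gv a b (i : ℕ)) (Sum.inr i) = x then 1 else 0) =
          ((Finset.range 6).filter fun m => gv a b m = x).card := by
        rw [Finset.card_filter]
        exact Fin.sum_univ_eq_sum_range (fun n => if gv a b n = x then 1 else 0) 6
      rw [hsum2, ← gl_count_eq]
      rcases eq_or_ne x c with hx | hx
      · have hzero : (gl a b 6).count x = 0 := by
          rw [gl_count_eq, Finset.card_eq_zero, Finset.filter_eq_empty_iff]
          intro m _
          rw [hx]
          rcases gv_mem a b m with h | h <;> rw [h]
          · exact hpc _
          · exact hqc _
        have h1 : (∑ i : Fin 1, if Sum.elim (fun _ : Fin 1 => c)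
            (fun i : Fin 6 => gv a b (i : ℕ)) (Sum.inl i) = x then 1 else 0) ≤ 1 := by
          simp only [Sum.elim_inl, Fin.sum_univ_one]
          by_cases h : c = x <;> simp [h]
        omega
      · have h1 : (∑ i : Fin 1, if Sum.elim (fun _ : Fin 1 => c)
            (fun i : Fin 6 => gv a b (i : ℕ)) (Sum.inl i) = x then 1 else 0) = 0 := by
          simp only [Sum.elim_inl, Fin.sum_univ_one]
          exact if_neg (fun h => hx h.symm)
        have h2 := gl_count_le a b hab 6 le_rfl x
        omega
  · -- not equitably 3-colorable
    rintro ⟨f, hprop, hbal⟩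
    set c := f (.inl 0) with hcdef
    have hleaf : ∀ i : Fin 6, f (.inr i) ≠ c := by
      intro i
      exact hprop (.inr i) (.inl 0) (by simp)
    have hmaps : ∀ i ∈ (Finset.univ : Finset (Fin 6)),
        f (.inr i) ∈ (Finset.univ : Finset (Fin 3)).erase c := by
      intro i _
      exact Finset.mem_erase.mpr ⟨hleaf i, Finset.mem_univ _⟩
    have hcard : ((Finset.univ : Finset (Fin 3)).erase c).card * 2 <
        (Finset.univ : Finset (Fin 6)).card := by
      rw [Finset.card_erase_of_mem (Finset.mem_univ _)]
      simp
    obtain ⟨j, hj, hjcard⟩ :=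
      Finset.exists_lt_card_fiber_of_mul_lt_card_of_maps_to hmaps hcard
    have hjc : j ≠ c := (Finset.mem_erase.mp hj).1
    have hge : 3 ≤ ((Finset.univ : Finset (Fin 1 ⊕ Fin 6)).filter fun v => f v = j).card := by
      calc 3 ≤ ((Finset.univ : Finset (Fin 6)).filter fun i => f (.inr i) = j).card := hjcard
        _ ≤ _ := by
          apply Finset.card_le_card_of_injOn Sum.inr
          · intro i hi
            simp only [Finset.mem_coe, Finset.mem_filter, Finset.mem_univ, true_and] at hi ⊢
            exact hi
          · exact fun x _ y _ h => Sum.inr_injective h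
    have hle : ((Finset.univ : Finset (Fin 1 ⊕ Fin 6)).filter fun v => f v = c).card ≤ 1 := by
      have hsub : ((Finset.univ : Finset (Fin 1 ⊕ Fin 6)).filter fun v => f v = c) ⊆
          {Sum.inl 0} := by
        rintro (k | i) hv
        · have : k = 0 := Subsingleton.elim _ _
          subst this; simp
        · simp only [Finset.mem_filter, Finset.mem_univ, true_and] at hv
          exact absurd hv (hleaf i)
      calc _ ≤ ({Sum.inl 0} : Finset (Fin 1 ⊕ Fin 6)).card := Finset.card_le_card hsub
        _ = 1 := Finset.card_singleton _
    have := hbal j c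
    omega
end

section
/- Let G be a graph with |V(G)| = kq + r where 1 ≤ r ≤ k, and let L be a k-assignment for G. Suppose t satisfies r ≤ t ≤ k, and S = {x_1, …, x_t} is a set of t distinct vertices of G such that |N_G(x_i) − S| ≤ k − i for each 1 ≤ i ≤ t. If G − S has an equitable L-coloring (with respect to the restriction of L), then G has an equitable L-coloring. -/
open SimpleGraph

attribute [local instance] Classical.propDecidable

theorem equitable_extension_lemma {V α : Type} [Fintype V] (G : SimpleGraph V)
    (k q r t : ℕ) (hr1 : 1 ≤ r) (hrk : r ≤ k) (hcard : Fintype.card V = k * q + r)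
    (L : V → Finset α) (hL : ∀ v, (L v).card = k)
    (hrt : r ≤ t) (htk : t ≤ k)
    (x : Fin t → V) (hinj : Function.Injective x)
    (S : Finset V) (hS : S = Finset.univ.image x)
    (hnbr : ∀ i : Fin t, ((G.neighborFinset (x i)) \ S).card ≤ k - ((i : ℕ) + 1))
    (hGS : ∃ g : ↥{v : V | v ∉ S} → α,
      IsEquitableLColoring (G.induce {v : V | v ∉ S}) k (fun v => L v.1) g) :
    ∃ f : V → α, IsEquitableLColoring G k L f := by
  obtain ⟨g, hg1, hg2, hg3⟩ := hGS
  have hk1 : 1 ≤ k := le_trans hr1 hrk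
  have hVpos : 0 < Fintype.card V := by omega
  have hVne : Nonempty V := Fintype.card_pos_iff.mp hVpos
  have hαne : Nonempty α := by
    obtain ⟨v⟩ := hVne
    have : (L v).Nonempty := Finset.card_pos.mp (by rw [hL]; omega)
    exact ⟨this.choose⟩
  have hmem : ∀ v, v ∈ S ↔ ∃ i, x i = v := by
    intro v; rw [hS]; simp [eq_comm]
  have hScard : S.card = t := by
    rw [hS, Finset.card_image_of_injective _ hinj, Finset.card_univ, Fintype.card_fin]
  have hSle : S.card ≤ Fintype.card V := Finset.card_le_univ S
  have hcompl : Fintype.card {v : V | v ∉ S} = Fintype.card V - S.card := by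
    simp [Set.toFinset_setOf]
    rw [← Finset.card_compl]; congr 1; ext; simp
  -- totalized g
  set g' : V → α := fun v => if h : v ∉ S then g ⟨v, h⟩ else Classical.arbitrary α with hg'
  have hg'eq : ∀ v (h : v ∉ S), g' v = g ⟨v, h⟩ := by
    intro v h; simp [hg', h]
  -- construct colors on S
  have hc : ∀ n, n ≤ t → ∃ c : Fin t → α,
      ∀ i : Fin t, (i : ℕ) < n →
        c i ∈ L (x i) ∧ (∀ v ∈ G.neighborFinset (x i) \ S, c i ≠ g' v) ∧
        ∀ j : Fin t, j < i → c i ≠ c j := by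
    intro n
    induction n with
    | zero => intro _; exact ⟨fun _ => Classical.arbitrary α, fun i hi => absurd hi (by omega)⟩
    | succ n ih =>
      intro hn
      obtain ⟨c, hcp⟩ := ih (by omega)
      have hnt : n < t := hn
      set i0 : Fin t := ⟨n, hnt⟩ with hi0
      set F : Finset α := ((G.neighborFinset (x i0)) \ S).image g' ∪
        ((Finset.range n).attach).image (fun m => c ⟨m.1, lt_trans (Finset.mem_range.mp m.2) hnt⟩) with hF
      have hFcard : F.card ≤ k - 1 := by
        have h1 := Finset.card_image_le (s := (G.neighborFinset (x i0)) \ S) (f := g')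
        have h2 := Finset.card_image_le (s := (Finset.range n).attach)
          (f := fun m => c ⟨m.1, lt_trans (Finset.mem_range.mp m.2) hnt⟩)
        have h3 := hnbr i0
        have h4 : ((Finset.range n).attach).card = n := by simp
        have h5 : F.card ≤ (((G.neighborFinset (x i0)) \ S).image g').card +
            (((Finset.range n).attach).image
              (fun m => c ⟨m.1, lt_trans (Finset.mem_range.mp m.2) hnt⟩)).card := by
          rw [hF]; exact Finset.card_union_le _ _
        have hi0v : (i0 : ℕ) = n := rfl
        rw [hi0v] at h3
        omega
      have hex : (L (x i0) \ F).Nonempty := by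
        have h6 : (L (x i0)).card - F.card ≤ (L (x i0) \ F).card := Finset.le_card_sdiff _ _
        have : 0 < (L (x i0) \ F).card := by rw [hL] at h6; omega
        exact Finset.card_pos.mp this
      obtain ⟨a, ha⟩ := hex
      rw [Finset.mem_sdiff] at ha
      obtain ⟨haL, haF⟩ := ha
      refine ⟨Function.update c i0 a, ?_⟩
      intro i hi
      rcases Nat.lt_or_ge (i : ℕ) n with hlt | hge
      · have hne : i ≠ i0 := by
          intro h; rw [h] at hlt; exact absurd hlt (by simp [hi0])
        rw [Function.update_of_ne hne]
        obtain ⟨p1, p2, p3⟩ := hcp i hlt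
        refine ⟨p1, p2, ?_⟩
        intro j hj
        have hjne : j ≠ i0 := by
          intro h
          have : (i0 : ℕ) < (i : ℕ) := h ▸ hj
          rw [hi0] at this; simp at this; omega
        rw [Function.update_of_ne hjne]
        exact p3 j hj
      · have hieq : i = i0 := by
          apply Fin.ext; rw [hi0]; simp; omega
        subst hieq
        rw [Function.update_self]
        refine ⟨haL, ?_, ?_⟩
        · intro v hv hcontra
          apply haF
          rw [hF, Finset.mem_union]
          exact Or.inl (hcontra ▸ Finset.mem_image_of_mem g' hv)
        · intro j hj
          have hjn : (j : ℕ) < n := hj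
          have hjne : j ≠ i0 := by
            intro h; rw [h] at hjn; exact absurd hjn (by simp [hi0])
          rw [Function.update_of_ne hjne]
          intro hcontra
          apply haF
          rw [hF, Finset.mem_union]
          refine Or.inr (Finset.mem_image.mpr ⟨⟨j.1, Finset.mem_range.mpr hjn⟩,
            Finset.mem_attach _ _, ?_⟩)
          exact (congrArg c (Fin.ext rfl)).trans hcontra.symm
  obtain ⟨c, hcall⟩ := hc t le_rfl
  have hcprop : ∀ i : Fin t, c i ∈ L (x i) ∧
      (∀ v ∈ G.neighborFinset (x i) \ S, c i ≠ g' v) ∧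
      ∀ j : Fin t, j < i → c i ≠ c j := fun i => hcall i i.2
  have hcinj : ∀ i j : Fin t, i ≠ j → c i ≠ c j := by
    intro i j hij
    rcases lt_or_gt_of_ne hij with h | h
    · exact fun hc' => (hcprop j).2.2 i h hc'.symm
    · exact (hcprop i).2.2 j h
  -- the extended coloring
  set f : V → α := fun v => if h : v ∈ S then c ((hmem v).mp h).choose else g' v with hfdef
  have hfx : ∀ i : Fin t, f (x i) = c i := by
    intro i
    have hx : x i ∈ S := (hmem _).mpr ⟨i, rfl⟩
    have hspec := ((hmem (x i)).mp hx).choose_spec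
    have : ((hmem (x i)).mp hx).choose = i := hinj hspec
    simp only [hfdef, hx, dif_pos, this]
  have hfn : ∀ v (h : v ∉ S), f v = g ⟨v, h⟩ := by
    intro v h
    simp only [hfdef, h, dif_neg, not_false_iff]
    exact hg'eq v h
  refine ⟨f, ?_, ?_, ?_⟩
  · -- list membership
    intro v
    by_cases h : v ∈ S
    · obtain ⟨i, rfl⟩ := (hmem v).mp h
      rw [hfx]; exact (hcprop i).1
    · rw [hfn v h]; exact hg1 ⟨v, h⟩
  · -- proper
    intro u v hadj
    by_cases hu : u ∈ S <;> by_cases hv : v ∈ S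
    · obtain ⟨i, rfl⟩ := (hmem u).mp hu
      obtain ⟨j, rfl⟩ := (hmem v).mp hv
      rw [hfx, hfx]
      exact hcinj i j (fun h => hadj.ne (congrArg x h))
    · obtain ⟨i, rfl⟩ := (hmem u).mp hu
      rw [hfx, hfn v hv, ← hg'eq v hv]
      exact (hcprop i).2.1 v (Finset.mem_sdiff.mpr ⟨(G.mem_neighborFinset _ _).mpr hadj, hv⟩)
    · obtain ⟨j, rfl⟩ := (hmem v).mp hv
      rw [hfx, hfn u hu, ← hg'eq u hu]
      exact fun h => (hcprop j).2.1 u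
        (Finset.mem_sdiff.mpr ⟨(G.mem_neighborFinset _ _).mpr hadj.symm, hu⟩) h.symm
    · rw [hfn u hu, hfn v hv]
      exact hg2 ⟨u, hu⟩ ⟨v, hv⟩ hadj
  · -- counting
    intro c0
    have hqq : q + 1 ≤ (Fintype.card V + k - 1) / k := by
      rw [Nat.le_div_iff_mul_le (by omega : 0 < k)]
      have : (q + 1) * k = k * q + k := by ring
      omega
    have hgb : (Finset.univ.filter fun v : ↥{v : V | v ∉ S} => g v = c0).card ≤ q := by
      have h1 := hg3 c0
      have h2 : Fintype.card ↥{v : V | v ∉ S} = k * q + r - t := by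
        rw [hcompl, hScard, hcard]
      have h3 : (Fintype.card ↥{v : V | v ∉ S} + k - 1) / k ≤ q := by
        rw [h2]
        have htle : t ≤ k * q + r := by rw [← hcard]; rw [← hScard]; exact hSle
        have e1 : k * q + r - t + k - 1 = k * q + (r + k - 1 - t) := by omega
        rw [e1, Nat.mul_add_div (by omega : 0 < k)]
        have : (r + k - 1 - t) / k = 0 := Nat.div_eq_of_lt (by omega)
        omega
      exact le_trans h1 h3
    have hsplit := Finset.card_filter_add_card_filter_not
      (s := Finset.univ.filter fun v => f v = c0) (p := fun v => v ∈ S)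
    have hA : ((Finset.univ.filter fun v => f v = c0).filter (fun v => v ∈ S)).card ≤ 1 := by
      apply Finset.card_le_one.mpr
      intro a ha b hb
      rw [Finset.mem_filter, Finset.mem_filter] at ha hb
      obtain ⟨i, hi⟩ := (hmem a).mp ha.2
      obtain ⟨j, hj⟩ := (hmem b).mp hb.2
      subst hi; subst hj
      have : c i = c j := by
        rw [← hfx i, ← hfx j, ha.1.2, hb.1.2]
      by_contra hne
      exact hcinj i j (fun h => hne (congrArg x h)) this
    have hB : ((Finset.univ.filter fun v => f v = c0).filter (fun v => ¬ v ∈ S)).card =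
        (Finset.univ.filter fun v : ↥{v : V | v ∉ S} => g v = c0).card := by
      apply Finset.card_bij (fun v hv => (⟨v, (Finset.mem_filter.mp hv).2⟩ : ↥{v : V | v ∉ S}))
      · intro a ha
        rw [Finset.mem_filter] at ha ⊢
        refine ⟨Finset.mem_univ _, ?_⟩
        have := (Finset.mem_filter.mp ha.1).2
        rw [hfn a ha.2] at this
        exact this
      · intro a ha b hb h
        exact congrArg Subtype.val h
      · intro b hb
        rw [Finset.mem_filter] at hb
        have hb2 : (b : V) ∉ S := b.2
        refine ⟨b.1, ?_, ?_⟩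
        · rw [Finset.mem_filter, Finset.mem_filter]
          refine ⟨⟨Finset.mem_univ _, ?_⟩, hb2⟩
          rw [hfn b.1 hb2]
          have : (⟨b.1, hb2⟩ : ↥{v : V | v ∉ S}) = b := Subtype.ext rfl
          rw [this]
          exact hb.2
        · exact Subtype.ext rfl
    calc (Finset.univ.filter fun v => f v = c0).card
        = ((Finset.univ.filter fun v => f v = c0).filter (fun v => v ∈ S)).card +
          ((Finset.univ.filter fun v => f v = c0).filter (fun v => ¬ v ∈ S)).card := hsplit.symm
      _ ≤ 1 + q := by rw [hB]; exact Nat.add_le_add hA hgb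
      _ ≤ (Fintype.card V + k - 1) / k := by omega
end

section
/- The square of the graph B(1,3,3) (the spider with legs of lengths 1, 3, 3) is equitably 4-choosable. -/
open SimpleGraph

attribute [local instance] Classical.propDecidable

/-- The spider `B(l₁, …, l_m)`: the subdivision of the star `K_{1,m}` whose `i`-th edge is
replaced by a path of length `l i`.  The vertex `Sum.inl ()` is the center, and
`Sum.inr ⟨i, j⟩` is the `(j+1)`-st vertex along the `i`-th leg. -/
def spider (m : ℕ) (l : Fin m → ℕ) : SimpleGraph (Unit ⊕ Σ i : Fin m, Fin (l i)) :=
  SimpleGraph.fromRel (fun x y => match x, y with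
    | Sum.inl _, Sum.inr ⟨_, j⟩ => (j : ℕ) = 0
    | Sum.inr ⟨i, j⟩, Sum.inr ⟨i', j'⟩ => (i : ℕ) = (i' : ℕ) ∧ (j : ℕ) + 1 = (j' : ℕ)
    | _, _ => False)

/-- The `p`-th power of `G`: same vertices, edges between distinct vertices at distance
at most `p` in `G`. -/
def graphPow {V : Type} (G : SimpleGraph V) (p : ℕ) : SimpleGraph V :=
  SimpleGraph.fromRel (fun u v => G.Reachable u v ∧ G.dist u v ≤ p)

/-! ### Auxiliary material for the proof -/

/-- The vertex type of the spider `B(1,3,3)`. -/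
abbrev SpV : Type := Unit ⊕ Σ i : Fin 3, Fin ((![1, 3, 3] : Fin 3 → ℕ) i)

/-- A numeric encoding of the eight vertices of `B(1,3,3)`:
center `0`; first leg `1`; second leg `4, 5, 6`; third leg `7, 8, 9`. -/
def spEnc : SpV → ℕ
  | Sum.inl _ => 0
  | Sum.inr ⟨i, j⟩ => 1 + 3 * i.val + j.val

lemma spBound (i : Fin 3) : (![1,3,3] : Fin 3 → ℕ) i = if i.val = 0 then 1 else 3 := by
  fin_cases i <;> norm_num

lemma spjlt {i : Fin 3} (j : Fin ((![1,3,3] : Fin 3 → ℕ) i)) :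
    (i.val = 0 ∧ j.val < 1) ∨ (i.val ≠ 0 ∧ j.val < 3) := by
  have h := j.isLt.trans_eq (spBound i)
  split at h
  · exact Or.inl ⟨by assumption, h⟩
  · exact Or.inr ⟨by assumption, h⟩

lemma spEnum (v : SpV) : spEnc v = 0 ∨ spEnc v = 1 ∨ spEnc v = 4 ∨ spEnc v = 5 ∨ spEnc v = 6
    ∨ spEnc v = 7 ∨ spEnc v = 8 ∨ spEnc v = 9 := by
  rcases v with _ | ⟨i, j⟩
  · left; rfl
  · have hj := spjlt j
    have hi := i.isLt
    simp only [spEnc]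
    omega

lemma spEnc_inj (u v : SpV) (h : spEnc u = spEnc v) : u = v := by
  rcases u with _ | ⟨i, j⟩ <;> rcases v with _ | ⟨i', j'⟩
  · rfl
  · have hj := spjlt j'; simp only [spEnc] at h; omega
  · have hj := spjlt j; simp only [spEnc] at h; omega
  · have hj := spjlt j; have hj' := spjlt j'
    have hi := i.isLt; have hi' := i'.isLt
    simp only [spEnc] at h
    have h1 : i.val = i'.val := by omega
    have : i = i' := Fin.ext h1
    subst this
    have h2 : j.val = j'.val := by omega
    have : j = j' := Fin.ext h2
    subst this
    rfl

/-- Encoded adjacency relation of the spider `B(1,3,3)`. -/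
def SA (m n : ℕ) : Prop :=
  (m = 0 ∧ n = 1) ∨ (m = 0 ∧ n = 4) ∨ (m = 0 ∧ n = 7) ∨ (m = 4 ∧ n = 5) ∨ (m = 5 ∧ n = 6)
  ∨ (m = 7 ∧ n = 8) ∨ (m = 8 ∧ n = 9)
  ∨ (n = 0 ∧ m = 1) ∨ (n = 0 ∧ m = 4) ∨ (n = 0 ∧ m = 7) ∨ (n = 4 ∧ m = 5) ∨ (n = 5 ∧ m = 6)
  ∨ (n = 7 ∧ m = 8) ∨ (n = 8 ∧ m = 9)

lemma spider_adj_imp (u v : SpV) (h : (spider 3 ![1,3,3]).Adj u v) :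
    SA (spEnc u) (spEnc v) := by
  rw [spider, SimpleGraph.fromRel_adj] at h
  obtain ⟨hne, h⟩ := h
  clear hne
  rcases u with _ | ⟨i, j⟩ <;> rcases v with _ | ⟨i', j'⟩
  · simp at h
  · have h' : (j' : ℕ) = 0 ∨ False := h
    clear h
    have hj := spjlt j'
    have hi := i'.isLt
    simp only [spEnc]
    rcases h' with h' | h'
    · rcases (by omega : i'.val = 0 ∨ i'.val = 1 ∨ i'.val = 2) with h0 | h0 | h0
      · exact Or.inl ⟨rfl, by omega⟩
      · exact Or.inr (Or.inl ⟨rfl, by omega⟩)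
      · exact Or.inr (Or.inr (Or.inl ⟨rfl, by omega⟩))
    · exact h'.elim
  · have h' : False ∨ (j : ℕ) = 0 := h
    clear h
    rcases h' with h' | h'
    · exact h'.elim
    · have hj := spjlt j
      have hi := i.isLt
      simp only [spEnc]
      rcases (by omega : i.val = 0 ∨ i.val = 1 ∨ i.val = 2) with h0 | h0 | h0
      · exact Or.inr (Or.inr (Or.inr (Or.inr (Or.inr (Or.inr (Or.inr (Or.inl ⟨rfl, by omega⟩)))))))
      · exact Or.inr (Or.inr (Or.inr (Or.inr (Or.inr (Or.inr (Or.inr (Or.inr (Or.inl ⟨rfl, by omega⟩))))))))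
      · exact Or.inr (Or.inr (Or.inr (Or.inr (Or.inr (Or.inr (Or.inr (Or.inr (Or.inr (Or.inl ⟨rfl, by omega⟩)))))))))
  · have h' : ((i : ℕ) = (i' : ℕ) ∧ (j : ℕ) + 1 = (j' : ℕ))
        ∨ ((i' : ℕ) = (i : ℕ) ∧ (j' : ℕ) + 1 = (j : ℕ)) := h
    clear h
    have hj := spjlt j; have hj' := spjlt j'
    have hi := i.isLt; have hi' := i'.isLt
    simp only [spEnc]
    rcases h' with ⟨h1, h2⟩ | ⟨h1, h2⟩
    · rcases (by omega : (i.val = 1 ∧ j.val = 0) ∨ (i.val = 1 ∧ j.val = 1)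
          ∨ (i.val = 2 ∧ j.val = 0) ∨ (i.val = 2 ∧ j.val = 1)) with h0 | h0 | h0 | h0
      · exact Or.inr (Or.inr (Or.inr (Or.inl ⟨by omega, by omega⟩)))
      · exact Or.inr (Or.inr (Or.inr (Or.inr (Or.inl ⟨by omega, by omega⟩))))
      · exact Or.inr (Or.inr (Or.inr (Or.inr (Or.inr (Or.inl ⟨by omega, by omega⟩)))))
      · exact Or.inr (Or.inr (Or.inr (Or.inr (Or.inr (Or.inr (Or.inl ⟨by omega, by omega⟩))))))
    · rcases (by omega : (i'.val = 1 ∧ j'.val = 0) ∨ (i'.val = 1 ∧ j'.val = 1)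
          ∨ (i'.val = 2 ∧ j'.val = 0) ∨ (i'.val = 2 ∧ j'.val = 1)) with h0 | h0 | h0 | h0
      · exact Or.inr (Or.inr (Or.inr (Or.inr (Or.inr (Or.inr (Or.inr (Or.inr (Or.inr (Or.inr (Or.inl ⟨by omega, by omega⟩))))))))))
      · exact Or.inr (Or.inr (Or.inr (Or.inr (Or.inr (Or.inr (Or.inr (Or.inr (Or.inr (Or.inr (Or.inr (Or.inl ⟨by omega, by omega⟩)))))))))))
      · exact Or.inr (Or.inr (Or.inr (Or.inr (Or.inr (Or.inr (Or.inr (Or.inr (Or.inr (Or.inr (Or.inr (Or.inr (Or.inl ⟨by omega, by omega⟩))))))))))))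
      · exact Or.inr (Or.inr (Or.inr (Or.inr (Or.inr (Or.inr (Or.inr (Or.inr (Or.inr (Or.inr (Or.inr (Or.inr (Or.inr ⟨by omega, by omega⟩))))))))))))

lemma pow2_decomp {V : Type} (G : SimpleGraph V) (u v : V) (h : (graphPow G 2).Adj u v) :
    u ≠ v ∧ (G.Adj u v ∨ ∃ w, G.Adj u w ∧ G.Adj w v) := by
  rw [graphPow, SimpleGraph.fromRel_adj] at h
  obtain ⟨hne, hd⟩ := h
  have key : ∀ {x y : V}, G.Reachable x y → G.dist x y ≤ 2 → x ≠ y →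
      (G.Adj x y ∨ ∃ w, G.Adj x w ∧ G.Adj w y) := by
    intro x y hr hd2 hxy
    obtain ⟨p, hp⟩ := hr.exists_walk_length_eq_dist
    rw [← hp] at hd2
    cases p with
    | nil => exact absurd rfl hxy
    | cons hadj q =>
      cases q with
      | nil => exact Or.inl hadj
      | @cons _ m _ hadj2 r =>
        have hr0 : r.length = 0 := by
          simp only [SimpleGraph.Walk.length_cons] at hd2
          omega
        have hmv := SimpleGraph.Walk.eq_of_length_eq_zero hr0
        subst hmv
        exact Or.inr ⟨_, hadj, hadj2⟩
  constructor
  · exact hne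
  · rcases hd with ⟨hr, hd2⟩ | ⟨hr, hd2⟩
    · exact key hr hd2 hne
    · rcases key hr hd2 (Ne.symm hne) with h | ⟨w, h1, h2⟩
      · exact Or.inl h.symm
      · exact Or.inr ⟨w, h2.symm, h1.symm⟩

lemma gstep {α : Type} (g : ℕ → α) (C A B1 B2 B3 D1 D2 D3 : α)
    (hg0 : g 0 = C) (hg1 : g 1 = A) (hg4 : g 4 = B1) (hg5 : g 5 = B2) (hg6 : g 6 = B3)
    (hg7 : g 7 = D1) (hg8 : g 8 = D2) (hg9 : g 9 = D3)
    (hA : A ≠ C) (hB1C : B1 ≠ C) (hB1A : B1 ≠ A)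
    (hD1C : D1 ≠ C) (hD1A : D1 ≠ A) (hD1B1 : D1 ≠ B1)
    (hB2C : B2 ≠ C) (hB2B1 : B2 ≠ B1) (hB2A : B2 ≠ A)
    (hD2C : D2 ≠ C) (hD2D1 : D2 ≠ D1) (hD2A : D2 ≠ A)
    (hB3B1 : B3 ≠ B1) (hB3B2 : B3 ≠ B2)
    (hD3D1 : D3 ≠ D1) (hD3D2 : D3 ≠ D2) (hD3B3 : D3 ≠ B3) :
    (∀ m n : ℕ, SA m n → g m ≠ g n) ∧
      (∀ m k n : ℕ, SA m k → SA k n → m ≠ n → g m ≠ g n) := by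
  have hA' := hA.symm; have hB1C' := hB1C.symm; have hB1A' := hB1A.symm
  have hD1C' := hD1C.symm; have hD1A' := hD1A.symm; have hD1B1' := hD1B1.symm
  have hB2C' := hB2C.symm; have hB2B1' := hB2B1.symm; have hB2A' := hB2A.symm
  have hD2C' := hD2C.symm; have hD2D1' := hD2D1.symm; have hD2A' := hD2A.symm
  have hB3B1' := hB3B1.symm; have hB3B2' := hB3B2.symm
  have hD3D1' := hD3D1.symm; have hD3D2' := hD3D2.symm; have hD3B3' := hD3B3.symm
  constructor
  · rintro m n (⟨rfl,rfl⟩|⟨rfl,rfl⟩|⟨rfl,rfl⟩|⟨rfl,rfl⟩|⟨rfl,rfl⟩|⟨rfl,rfl⟩|⟨rfl,rfl⟩|⟨rfl,rfl⟩|⟨rfl,rfl⟩|⟨rfl,rfl⟩|⟨rfl,rfl⟩|⟨rfl,rfl⟩|⟨rfl,rfl⟩|⟨rfl,rfl⟩) <;>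
      simp only [hg0, hg1, hg4, hg5, hg6, hg7, hg8, hg9] <;> assumption
  · rintro m k n
      (⟨rfl,rfl⟩|⟨rfl,rfl⟩|⟨rfl,rfl⟩|⟨rfl,rfl⟩|⟨rfl,rfl⟩|⟨rfl,rfl⟩|⟨rfl,rfl⟩|⟨rfl,rfl⟩|⟨rfl,rfl⟩|⟨rfl,rfl⟩|⟨rfl,rfl⟩|⟨rfl,rfl⟩|⟨rfl,rfl⟩|⟨rfl,rfl⟩)
      (⟨h,rfl⟩|⟨h,rfl⟩|⟨h,rfl⟩|⟨h,rfl⟩|⟨h,rfl⟩|⟨h,rfl⟩|⟨h,rfl⟩|⟨rfl,h⟩|⟨rfl,h⟩|⟨rfl,h⟩|⟨rfl,h⟩|⟨rfl,h⟩|⟨rfl,h⟩|⟨rfl,h⟩)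
      hmn <;>
    first
      | omega
      | (simp only [hg0, hg1, hg4, hg5, hg6, hg7, hg8, hg9]; assumption)

lemma gcount {α : Type} (g : ℕ → α) (C A B1 B2 B3 D1 D2 D3 : α)
    (hg0 : g 0 = C) (hg1 : g 1 = A) (hg4 : g 4 = B1) (hg5 : g 5 = B2) (hg6 : g 6 = B3)
    (hg7 : g 7 = D1) (hg8 : g 8 = D2) (hg9 : g 9 = D3)
    (hA : A ≠ C) (hB1C : B1 ≠ C) (hB1A : B1 ≠ A)
    (hD1C : D1 ≠ C) (hD1A : D1 ≠ A) (hD1B1 : D1 ≠ B1)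
    (hB2C : B2 ≠ C) (hB2B1 : B2 ≠ B1) (hB2A : B2 ≠ A)
    (hD2C : D2 ≠ C) (hD2D1 : D2 ≠ D1) (hD2A : D2 ≠ A)
    (hB3B1 : B3 ≠ B1) (hB3B2 : B3 ≠ B2)
    (hD3D1 : D3 ≠ D1) (hD3D2 : D3 ≠ D2) (hD3B3 : D3 ≠ B3) (c : α) :
    (Finset.univ.filter fun v : SpV => g (spEnc v) = c).card ≤ 2 := by
  classical
  have pair : ∀ X Y : α, X ≠ Y →
      (if X = c then (1:ℕ) else 0) + (if Y = c then 1 else 0) ≤ 1 := by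
    intro X Y h
    split_ifs with h1 h2
    · exact absurd (h1.trans h2.symm) h
    all_goals omega
  have single : ∀ X : α, (if X = c then (1:ℕ) else 0) ≤ 1 := by
    intro X; split_ifs <;> omega
  rw [Finset.card_filter]
  rw [Fintype.sum_sum_type]
  rw [← Finset.univ_sigma_univ, Finset.sum_sigma]
  simp only [spEnc]
  simp only [Finset.sum_fin_eq_sum_range]
  norm_num [Finset.sum_range_succ, Finset.sum_range_zero, apply_ite Finset.card]
  simp only [hg0, hg1, hg4, hg5, hg6, hg7, hg8, hg9]
  have q1 := pair A C hA
  have q2 := pair B1 C hB1C; have q3 := pair B1 A hB1A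
  have q4 := pair D1 C hD1C; have q5 := pair D1 A hD1A; have q6 := pair D1 B1 hD1B1
  have q7 := pair B2 C hB2C; have q8 := pair B2 B1 hB2B1; have q9 := pair B2 A hB2A
  have q10 := pair D2 C hD2C; have q11 := pair D2 D1 hD2D1; have q12 := pair D2 A hD2A
  have q13 := pair B3 B1 hB3B1; have q14 := pair B3 B2 hB3B2
  have q15 := pair D3 D1 hD3D1; have q16 := pair D3 D2 hD3D2; have q17 := pair D3 B3 hD3B3
  have s1 := single C; have s2 := single A; have s3 := single B1; have s4 := single B2
  have s5 := single B3; have s6 := single D1; have s7 := single D2; have s8 := single D3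
  omega

/-- The eight vertices of `B(1,3,3)`. -/
def vC : SpV := Sum.inl ()
def vA : SpV := Sum.inr ⟨0, ⟨0, by norm_num⟩⟩
def vB1 : SpV := Sum.inr ⟨1, ⟨0, by norm_num⟩⟩
def vB2 : SpV := Sum.inr ⟨1, ⟨1, by norm_num⟩⟩
def vB3 : SpV := Sum.inr ⟨1, ⟨2, by norm_num⟩⟩
def vD1 : SpV := Sum.inr ⟨2, ⟨0, by decide⟩⟩
def vD2 : SpV := Sum.inr ⟨2, ⟨1, by decide⟩⟩
def vD3 : SpV := Sum.inr ⟨2, ⟨2, by decide⟩⟩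

lemma encC : spEnc vC = 0 := rfl
lemma encA : spEnc vA = 1 := rfl
lemma encB1 : spEnc vB1 = 4 := rfl
lemma encB2 : spEnc vB2 = 5 := rfl
lemma encB3 : spEnc vB3 = 6 := rfl
lemma encD1 : spEnc vD1 = 7 := rfl
lemma encD2 : spEnc vD2 = 8 := rfl
lemma encD3 : spEnc vD3 = 9 := rfl

lemma spVenum (v : SpV) : v = vC ∨ v = vA ∨ v = vB1 ∨ v = vB2 ∨ v = vB3
    ∨ v = vD1 ∨ v = vD2 ∨ v = vD3 := by
  rcases spEnum v with h|h|h|h|h|h|h|h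
  · exact Or.inl (spEnc_inj v vC (h.trans encC.symm))
  · exact Or.inr (Or.inl (spEnc_inj v vA (h.trans encA.symm)))
  · exact Or.inr (Or.inr (Or.inl (spEnc_inj v vB1 (h.trans encB1.symm))))
  · exact Or.inr (Or.inr (Or.inr (Or.inl (spEnc_inj v vB2 (h.trans encB2.symm)))))
  · exact Or.inr (Or.inr (Or.inr (Or.inr (Or.inl (spEnc_inj v vB3 (h.trans encB3.symm))))))
  · exact Or.inr (Or.inr (Or.inr (Or.inr (Or.inr (Or.inl (spEnc_inj v vD1 (h.trans encD1.symm)))))))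
  · exact Or.inr (Or.inr (Or.inr (Or.inr (Or.inr (Or.inr (Or.inl (spEnc_inj v vD2 (h.trans encD2.symm))))))))
  · exact Or.inr (Or.inr (Or.inr (Or.inr (Or.inr (Or.inr (Or.inr (spEnc_inj v vD3 (h.trans encD3.symm))))))))

lemma pick {α : Type} (S : Finset α) (hS : S.card = 4) (x y z : α) :
    ∃ w ∈ S, w ≠ x ∧ w ≠ y ∧ w ≠ z := by
  classical
  have h3 : ({x, y, z} : Finset α).card ≤ 3 := by
    refine (Finset.card_insert_le _ _).trans (Nat.succ_le_succ ?_)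
    refine (Finset.card_insert_le _ _).trans (Nat.succ_le_succ ?_)
    simp
  have hle := Finset.le_card_sdiff ({x,y,z} : Finset α) S
  have hsd : 0 < (S \ {x,y,z}).card := by omega
  obtain ⟨w, hw⟩ := Finset.card_pos.mp hsd
  rw [Finset.mem_sdiff] at hw
  have hw2 := hw.2
  simp only [Finset.mem_insert, Finset.mem_singleton, not_or] at hw2
  exact ⟨w, hw.1, hw2.1, hw2.2.1, hw2.2.2⟩

theorem spider_1_3_3_square_equitably_4_choosable :
    EquitablyChoosable (graphPow (spider 3 ![1, 3, 3]) 2) 4 := by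
  intro α L hL
  have hne0 : (L vC).Nonempty := Finset.card_pos.mp (by rw [hL vC]; norm_num)
  obtain ⟨e, -⟩ := hne0
  obtain ⟨C, hCmem, -, -, -⟩ := pick (L vC) (hL vC) e e e
  obtain ⟨A, hAmem, hA, -, -⟩ := pick (L vA) (hL vA) C C C
  obtain ⟨B1, hB1mem, hB1C, hB1A, -⟩ := pick (L vB1) (hL vB1) C A A
  obtain ⟨D1, hD1mem, hD1C, hD1A, hD1B1⟩ := pick (L vD1) (hL vD1) C A B1
  obtain ⟨B2, hB2mem, hB2C, hB2B1, hB2A⟩ := pick (L vB2) (hL vB2) C B1 A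
  obtain ⟨D2, hD2mem, hD2C, hD2D1, hD2A⟩ := pick (L vD2) (hL vD2) C D1 A
  obtain ⟨B3, hB3mem, hB3B1, hB3B2, -⟩ := pick (L vB3) (hL vB3) B1 B2 B2
  obtain ⟨D3, hD3mem, hD3D1, hD3D2, hD3B3⟩ := pick (L vD3) (hL vD3) D1 D2 B3
  obtain ⟨g, hg0, hg1, hg4, hg5, hg6, hg7, hg8, hg9⟩ :
      ∃ g : ℕ → α, g 0 = C ∧ g 1 = A ∧ g 4 = B1 ∧ g 5 = B2 ∧ g 6 = B3 ∧ g 7 = D1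
        ∧ g 8 = D2 ∧ g 9 = D3 :=
    ⟨fun n => if n = 0 then C else if n = 1 then A else if n = 4 then B1 else if n = 5 then B2
      else if n = 6 then B3 else if n = 7 then D1 else if n = 8 then D2 else D3, by norm_num⟩
  refine ⟨fun v => g (spEnc v), ?_, ?_, ?_⟩
  · intro v
    rcases spVenum v with rfl|rfl|rfl|rfl|rfl|rfl|rfl|rfl
    · simpa only [encC, hg0] using hCmem
    · simpa only [encA, hg1] using hAmem
    · simpa only [encB1, hg4] using hB1mem
    · simpa only [encB2, hg5] using hB2mem
    · simpa only [encB3, hg6] using hB3mem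
    · simpa only [encD1, hg7] using hD1mem
    · simpa only [encD2, hg8] using hD2mem
    · simpa only [encD3, hg9] using hD3mem
  · intro u v huv
    obtain ⟨hne, hcase⟩ := pow2_decomp _ u v huv
    obtain ⟨st1, st2⟩ := gstep g C A B1 B2 B3 D1 D2 D3 hg0 hg1 hg4 hg5 hg6 hg7 hg8 hg9
      hA hB1C hB1A hD1C hD1A hD1B1 hB2C hB2B1 hB2A hD2C hD2D1 hD2A hB3B1 hB3B2
      hD3D1 hD3D2 hD3B3
    rcases hcase with h | ⟨w, h1, h2⟩
    · exact st1 _ _ (spider_adj_imp u v h)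
    · exact st2 _ _ _ (spider_adj_imp u w h1) (spider_adj_imp w v h2)
        (fun he => hne (spEnc_inj u v he))
  · intro c
    have hbound : (Fintype.card SpV + 4 - 1) / 4 = 2 := by rfl
    calc (Finset.univ.filter fun v : SpV => g (spEnc v) = c).card
        ≤ 2 := gcount g C A B1 B2 B3 D1 D2 D3 hg0 hg1 hg4 hg5 hg6 hg7 hg8 hg9
          hA hB1C hB1A hD1C hD1A hD1B1 hB2C hB2B1 hB2A hD2C hD2D1 hD2A hB3B1 hB3B2
          hD3D1 hD3D2 hD3B3 c
      _ = (Fintype.card SpV + 4 - 1) / 4 := hbound.symm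
end

section
/- For all p, n ∈ ℕ, the p-th power of the path P_n is equitably k-choosable for every k ≥ p + 1. -/
open SimpleGraph

attribute [local instance] Classical.propDecidable

/-- Greedy list coloring of `ℕ`: vertex `i` gets a color from `L i` distinct from the colors
of the previous `max p (i % k)` vertices. -/
noncomputable def greedy (p k : ℕ) {α : Type} (d : α) (L : ℕ → Finset α) : ℕ → α
  | i =>
    let s := L i \ (Finset.Ico (i - max p (i % k)) i).attach.image
      (fun j => greedy p k d L j.1)
    if hs : s.Nonempty then hs.choose else d
  termination_by i => i
  decreasing_by exact (Finset.mem_Ico.mp j.2).2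

lemma greedy_spec (p k : ℕ) {α : Type} (d : α) (L : ℕ → Finset α)
    (hk : ∀ i, k ≤ (L i).card) (hpk : p < k) (i : ℕ) :
    greedy p k d L i ∈ L i ∧
      ∀ j, i - max p (i % k) ≤ j → j < i → greedy p k d L j ≠ greedy p k d L i := by
  rw [greedy]
  set forb := (Finset.Ico (i - max p (i % k)) i).attach.image
      (fun j => greedy p k d L j.1) with hforb
  have hcard : forb.card ≤ max p (i % k) := by
    refine Finset.card_image_le.trans ?_
    simp [Nat.card_Ico]
    omega
  have hmax : max p (i % k) < k := by
    have := Nat.mod_lt i (show 0 < k by omega)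
    omega
  have hs : (L i \ forb).Nonempty := by
    have := Finset.le_card_sdiff forb (L i)
    have := hk i
    refine Finset.card_pos.mp ?_
    omega
  rw [dif_pos hs]
  have hmem := hs.choose_spec
  rw [Finset.mem_sdiff] at hmem
  refine ⟨hmem.1, fun j hj1 hj2 hne => hmem.2 ?_⟩
  exact Finset.mem_image.mpr ⟨⟨j, Finset.mem_Ico.mpr ⟨hj1, hj2⟩⟩, Finset.mem_attach _ _, hne⟩

lemma pathGraph_walk_bound {n : ℕ} {u v : Fin n} (w : (SimpleGraph.pathGraph n).Walk u v) :
    u.val ≤ v.val + w.length ∧ v.val ≤ u.val + w.length := by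
  induction w with
  | nil => simp
  | cons h w ih =>
    rw [pathGraph_adj] at h
    rw [Walk.length_cons]
    omega

theorem path_power_equitably_choosable (p n : ℕ) (hp : 1 ≤ p) (hn : 1 ≤ n) :
    ∀ k, p + 1 ≤ k → EquitablyChoosable (graphPow (SimpleGraph.pathGraph n) p) k := by
  intro k hk α L hL
  have hpk : p < k := by omega
  have hk0 : 0 < k := by omega
  have h0 : (L ⟨0, hn⟩).Nonempty := by rw [← Finset.card_pos, hL]; omega
  obtain ⟨d, -⟩ := h0
  set L' : ℕ → Finset α := fun i => L ⟨i % n, Nat.mod_lt i hn⟩ with hL'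
  have hL'k : ∀ i, k ≤ (L' i).card := fun i => (hL _).ge
  set f : Fin n → α := fun v => greedy p k d L' v.val with hf
  have spec := fun i => greedy_spec p k d L' hL'k hpk i
  have key : ∀ j i : ℕ, j < i → (i - j ≤ p ∨ j / k = i / k) →
      greedy p k d L' j ≠ greedy p k d L' i := by
    intro j i hji hcase
    refine (spec i).2 j ?_ hji
    have h1 := Nat.le_max_left p (i % k)
    have h2 := Nat.le_max_right p (i % k)
    rcases hcase with h | h
    · omega
    · have e1 : i = k * (i / k) + i % k := (Nat.div_add_mod i k).symm
      have e2 : j = k * (i / k) + j % k := by rw [← h]; exact (Nat.div_add_mod j k).symm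
      omega
  have mem : ∀ v, f v ∈ L v := by
    intro v
    have h1 := (spec v.val).1
    have hv : (⟨v.val % n, Nat.mod_lt v.val hn⟩ : Fin n) = v :=
      Fin.ext (Nat.mod_eq_of_lt v.isLt)
    simp only [hL'] at h1
    rw [hv] at h1
    exact h1
  have proper : ∀ u v, (graphPow (SimpleGraph.pathGraph n) p).Adj u v → f u ≠ f v := by
    intro u v hadj
    rw [graphPow, fromRel_adj] at hadj
    obtain ⟨hne, hcase⟩ := hadj
    have hdist : u.val ≤ v.val + p ∧ v.val ≤ u.val + p := by
      rcases hcase with ⟨hr, hd⟩ | ⟨hr, hd⟩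
      · obtain ⟨w, hw⟩ := hr.exists_walk_length_eq_dist
        have := pathGraph_walk_bound w; omega
      · obtain ⟨w, hw⟩ := hr.exists_walk_length_eq_dist
        have := pathGraph_walk_bound w; omega
    have hvne : u.val ≠ v.val := fun h => hne (Fin.ext h)
    rcases Nat.lt_or_ge u.val v.val with h | h
    · exact key u.val v.val h (Or.inl (by omega))
    · exact (key v.val u.val (by omega) (Or.inl (by omega))).symm
  refine ⟨f, mem, proper, ?_⟩
  intro c
  have hinj : Set.InjOn (fun v : Fin n => v.val / k)
      (Finset.univ.filter fun v => f v = c) := by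
    intro a ha b hb hab
    simp only [Finset.coe_filter, Set.mem_setOf_eq, Finset.mem_univ, true_and] at ha hb
    by_contra hne
    have hvne : a.val ≠ b.val := fun h => hne (Fin.ext h)
    rcases Nat.lt_or_ge a.val b.val with h | h
    · exact key a.val b.val h (Or.inr hab) (ha.trans hb.symm)
    · exact key b.val a.val (by omega) (Or.inr hab.symm) (hb.trans ha.symm)
  have hsub : ∀ v ∈ Finset.univ.filter (fun v : Fin n => f v = c),
      v.val / k ∈ Finset.range ((n - 1) / k + 1) := by
    intro v _
    rw [Finset.mem_range]
    have hv : v.val ≤ n - 1 := by have := v.isLt; omega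
    have := Nat.div_le_div_right (c := k) hv
    omega
  have hle := Finset.card_le_card_of_injOn _ hsub hinj
  rw [Finset.card_range] at hle
  have heq : (n - 1) / k + 1 = (n + k - 1) / k := by
    have h1 : n + k - 1 = (n - 1) + k := by omega
    rw [h1, Nat.add_div_right _ hk0]
  rw [Fintype.card_fin]
  omega
end

section
/- For every m ≥ 1, the total graph of the path P_m is isomorphic to the square of the path P_{2m−1}. -/
open SimpleGraph

attribute [local instance] Classical.propDecidable

/-- The total graph of `G`: vertices are the vertices and edges of `G`, with adjacency
given by adjacency or incidence in `G`. -/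
def totalGraph {V : Type} (G : SimpleGraph V) : SimpleGraph (V ⊕ G.edgeSet) :=
  SimpleGraph.fromRel (fun x y => match x, y with
    | Sum.inl u, Sum.inl v => G.Adj u v
    | Sum.inl u, Sum.inr e => u ∈ (e : Sym2 V)
    | Sum.inr _, Sum.inl _ => False
    | Sum.inr e, Sum.inr f => ∃ u, u ∈ (e : Sym2 V) ∧ u ∈ (f : Sym2 V))

lemma pathGraph_adj_dist {n : ℕ} {u v : Fin n} :
    (SimpleGraph.pathGraph n).Adj u v ↔ Nat.dist u.val v.val = 1 := by
  rw [SimpleGraph.pathGraph_adj, Nat.dist]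
  omega

lemma pathGraph_walk_len {n : ℕ} : ∀ {u v : Fin n}
    (w : (SimpleGraph.pathGraph n).Walk u v), Nat.dist u.val v.val ≤ w.length
  | _, _, SimpleGraph.Walk.nil => by simp [Nat.dist_self]
  | u, v, @SimpleGraph.Walk.cons _ _ _ x _ h p => by
    have h1 := pathGraph_adj_dist.mp h
    have h2 := pathGraph_walk_len p
    have h3 := Nat.dist.triangle_inequality u.val x.val v.val
    simp only [SimpleGraph.Walk.length_cons]
    omega

lemma pow2_adj {n : ℕ} (u v : Fin n) :
    (graphPow (SimpleGraph.pathGraph n) 2).Adj u v ↔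
      u ≠ v ∧ Nat.dist u.val v.val ≤ 2 := by
  rw [graphPow, SimpleGraph.fromRel_adj]
  constructor
  · rintro ⟨hne, h | h⟩
    · obtain ⟨hr, hd⟩ := h
      obtain ⟨w, hw⟩ := hr.exists_walk_length_eq_dist
      exact ⟨hne, by have := pathGraph_walk_len w; omega⟩
    · obtain ⟨hr, hd⟩ := h
      obtain ⟨w, hw⟩ := hr.exists_walk_length_eq_dist
      have := pathGraph_walk_len w
      rw [Nat.dist_comm]
      exact ⟨hne, by omega⟩
  · rintro ⟨hne, hd⟩
    refine ⟨hne, Or.inl ?_⟩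
    have hne' : u.val ≠ v.val := fun h => hne (Fin.ext h)
    have hpos : 1 ≤ Nat.dist u.val v.val := by
      rcases Nat.eq_zero_or_pos (Nat.dist u.val v.val) with h | h
      · exact absurd (Nat.eq_of_dist_eq_zero h) hne'
      · exact h
    interval_cases h : Nat.dist u.val v.val
    · have hadj : (SimpleGraph.pathGraph n).Adj u v := pathGraph_adj_dist.mpr h
      exact ⟨hadj.reachable, le_trans (SimpleGraph.dist_le hadj.toWalk) (by simp)⟩
    · have h2 : u.val + 2 = v.val ∨ v.val + 2 = u.val := by
        rw [Nat.dist] at h; omega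
      have hmlt : (min u.val v.val) + 1 < n := by
        have := u.isLt; have := v.isLt; omega
      set w : Fin n := ⟨min u.val v.val + 1, hmlt⟩ with hw
      have h1 : (SimpleGraph.pathGraph n).Adj u w := by
        rw [pathGraph_adj_dist]; simp only [hw, Nat.dist]; omega
      have h2' : (SimpleGraph.pathGraph n).Adj w v := by
        rw [pathGraph_adj_dist]; simp only [hw, Nat.dist]; omega
      refine ⟨(h1.reachable.trans h2'.reachable), ?_⟩
      have : (SimpleGraph.pathGraph n).dist u v ≤
          (SimpleGraph.Walk.cons h1 h2'.toWalk).length := SimpleGraph.dist_le _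
      simpa using this

lemma edge_rep {m : ℕ} (e : (SimpleGraph.pathGraph m).edgeSet) :
    ∃ i : ℕ, ∃ h : i + 1 < m,
      (e : Sym2 (Fin m)) = s(⟨i, Nat.lt_of_succ_lt h⟩, ⟨i + 1, h⟩) := by
  obtain ⟨e, he⟩ := e
  induction e using Sym2.ind with
  | _ u v =>
    rw [SimpleGraph.mem_edgeSet, SimpleGraph.pathGraph_adj] at he
    rcases he with h | h
    · exact ⟨u.val, by omega, by
        rw [show ((⟨s(u,v),he⟩ : (SimpleGraph.pathGraph m).edgeSet) : Sym2 (Fin m)) = s(u,v)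
          from rfl, Sym2.eq_iff]
        exact Or.inl ⟨Fin.ext rfl, Fin.ext h.symm⟩⟩
    · exact ⟨v.val, by omega, by
        rw [show ((⟨s(u,v),he⟩ : (SimpleGraph.pathGraph m).edgeSet) : Sym2 (Fin m)) = s(u,v)
          from rfl, Sym2.eq_iff]
        exact Or.inr ⟨Fin.ext h.symm, Fin.ext rfl⟩⟩

noncomputable def eidx {m : ℕ} (e : (SimpleGraph.pathGraph m).edgeSet) : ℕ :=
  (edge_rep e).choose

lemma eidx_lt {m : ℕ} (e : (SimpleGraph.pathGraph m).edgeSet) : eidx e + 1 < m :=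
  (edge_rep e).choose_spec.choose

lemma eidx_eq {m : ℕ} (e : (SimpleGraph.pathGraph m).edgeSet) :
    (e : Sym2 (Fin m)) =
      s(⟨eidx e, Nat.lt_of_succ_lt (eidx_lt e)⟩, ⟨eidx e + 1, eidx_lt e⟩) :=
  (edge_rep e).choose_spec.choose_spec

lemma pair_inj {m : ℕ} {i j : ℕ} {p1 p2 p3 p4}
    (h : s((⟨i, p1⟩ : Fin m), ⟨i + 1, p2⟩) = s((⟨j, p3⟩ : Fin m), ⟨j + 1, p4⟩)) :
    i = j := by
  rw [Sym2.eq_iff] at h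
  rcases h with ⟨h1, h2⟩ | ⟨h1, h2⟩ <;>
    simp only [Fin.mk.injEq] at h1 h2 <;> omega

lemma mem_pair_iff {m : ℕ} {u : Fin m} {i : ℕ} {p1 p2} :
    u ∈ s((⟨i, p1⟩ : Fin m), (⟨i + 1, p2⟩ : Fin m)) ↔ u.val = i ∨ u.val = i + 1 := by
  rw [Sym2.mem_iff]
  constructor
  · rintro (rfl | rfl)
    · exact Or.inl rfl
    · exact Or.inr rfl
  · rintro (h | h)
    · exact Or.inl (Fin.ext h)
    · exact Or.inr (Fin.ext h)

noncomputable def tfun (m : ℕ) :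
    (Fin m ⊕ (SimpleGraph.pathGraph m).edgeSet) → Fin (2 * m - 1)
  | Sum.inl u => ⟨2 * u.val, by have := u.isLt; omega⟩
  | Sum.inr e => ⟨2 * eidx e + 1, by have := eidx_lt e; omega⟩

lemma tfun_inl_val {m : ℕ} (u : Fin m) : (tfun m (Sum.inl u)).val = 2 * u.val := rfl
lemma tfun_inr_val {m : ℕ} (e : (SimpleGraph.pathGraph m).edgeSet) :
    (tfun m (Sum.inr e)).val = 2 * eidx e + 1 := rfl

noncomputable def gfun (m : ℕ) (j : Fin (2 * m - 1)) :
    Fin m ⊕ (SimpleGraph.pathGraph m).edgeSet :=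
  if h : j.val % 2 = 0 then Sum.inl ⟨j.val / 2, by have := j.isLt; omega⟩
  else Sum.inr ⟨s(⟨j.val / 2, by have := j.isLt; omega⟩,
    ⟨j.val / 2 + 1, by have := j.isLt; omega⟩), by
      rw [SimpleGraph.mem_edgeSet, SimpleGraph.pathGraph_adj]; exact Or.inl rfl⟩

lemma gfun_tfun (m : ℕ) (x : Fin m ⊕ (SimpleGraph.pathGraph m).edgeSet) :
    gfun m (tfun m x) = x := by
  rcases x with u | e
  · rw [tfun, gfun, dif_pos (by simp)]
    congr 1
    apply Fin.ext
    show 2 * u.val / 2 = u.val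
    omega
  · rw [tfun, gfun, dif_neg (by show ¬((2 * eidx e + 1) % 2 = 0); omega)]
    refine congrArg Sum.inr (Subtype.ext ?_)
    rw [eidx_eq e]
    dsimp only
    rw [Sym2.eq_iff]
    refine Or.inl ⟨Fin.ext ?_, Fin.ext ?_⟩ <;>
      · show _ = _
        dsimp only
        omega

lemma tfun_gfun (m : ℕ) (j : Fin (2 * m - 1)) : tfun m (gfun m j) = j := by
  by_cases h : j.val % 2 = 0
  · rw [gfun, dif_pos h, tfun]
    apply Fin.ext
    show 2 * (j.val / 2) = j.val
    omega
  · rw [gfun, dif_neg h, tfun]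
    set e₀ : (SimpleGraph.pathGraph m).edgeSet :=
      ⟨s(⟨j.val / 2, by have := j.isLt; omega⟩,
        ⟨j.val / 2 + 1, by have := j.isLt; omega⟩), by
          rw [SimpleGraph.mem_edgeSet, SimpleGraph.pathGraph_adj]; exact Or.inl rfl⟩ with he₀
    have hi : eidx e₀ = j.val / 2 := pair_inj ((eidx_eq e₀).symm.trans rfl)
    apply Fin.ext
    show 2 * eidx e₀ + 1 = j.val
    omega

lemma mem_eidx_iff {m : ℕ} (e : (SimpleGraph.pathGraph m).edgeSet) (u : Fin m) :
    u ∈ (e : Sym2 (Fin m)) ↔ u.val = eidx e ∨ u.val = eidx e + 1 := by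
  rw [eidx_eq e, mem_pair_iff]

lemma tot_adj {m : ℕ} (x y : Fin m ⊕ (SimpleGraph.pathGraph m).edgeSet) :
    (totalGraph (SimpleGraph.pathGraph m)).Adj x y ↔
      (graphPow (SimpleGraph.pathGraph (2 * m - 1)) 2).Adj (tfun m x) (tfun m y) := by
  rw [pow2_adj, totalGraph, SimpleGraph.fromRel_adj]
  have key : ∀ a b : Fin (2 * m - 1),
      (a ≠ b ∧ Nat.dist a.val b.val ≤ 2) ↔
      (a.val ≠ b.val ∧ a.val - b.val + (b.val - a.val) ≤ 2) := by
    intro a b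
    rw [Nat.dist]
    constructor
    · rintro ⟨h1, h2⟩; exact ⟨fun hh => h1 (Fin.ext hh), h2⟩
    · rintro ⟨h1, h2⟩; exact ⟨fun hh => h1 (congrArg Fin.val hh), h2⟩
  rw [key]
  rcases x with u | e <;> rcases y with v | f
  · rw [tfun_inl_val, tfun_inl_val]
    constructor
    · rintro ⟨hne, h | h⟩ <;>
      · replace h : (SimpleGraph.pathGraph m).Adj u v ∨ (SimpleGraph.pathGraph m).Adj v u :=
          by first | exact Or.inl h | exact Or.inr h
        rcases h with h | h <;> rw [SimpleGraph.pathGraph_adj] at h <;>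
          exact ⟨by omega, by omega⟩
    · rintro ⟨hne, hd⟩
      refine ⟨fun hh => ?_, Or.inl ?_⟩
      · have := congrArg Fin.val (Sum.inl.inj hh); omega
      · show (SimpleGraph.pathGraph m).Adj u v
        rw [SimpleGraph.pathGraph_adj]
        omega
  · rw [tfun_inl_val, tfun_inr_val]
    constructor
    · rintro ⟨-, h | h⟩
      · replace h : u ∈ (f : Sym2 (Fin m)) := h
        rw [mem_eidx_iff] at h
        exact ⟨by omega, by omega⟩
      · exact (h : False).elim
    · rintro ⟨hne, hd⟩
      refine ⟨by simp, Or.inl ?_⟩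
      show u ∈ (f : Sym2 (Fin m))
      rw [mem_eidx_iff]
      omega
  · rw [tfun_inr_val, tfun_inl_val]
    constructor
    · rintro ⟨-, h | h⟩
      · exact (h : False).elim
      · replace h : v ∈ (e : Sym2 (Fin m)) := h
        rw [mem_eidx_iff] at h
        exact ⟨by omega, by omega⟩
    · rintro ⟨hne, hd⟩
      refine ⟨by simp, Or.inr ?_⟩
      show v ∈ (e : Sym2 (Fin m))
      rw [mem_eidx_iff]
      omega
  · rw [tfun_inr_val, tfun_inr_val]
    have hef : e = f ↔ eidx e = eidx f := by
      constructor
      · rintro rfl; rfl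
      · intro h
        apply Subtype.ext
        have h1 := eidx_eq e
        have h2 := eidx_eq f
        rw [show ((e : Sym2 (Fin m))) = e.val from rfl] at h1
        rw [show ((f : Sym2 (Fin m))) = f.val from rfl] at h2
        rw [h1, h2, Sym2.eq_iff]
        exact Or.inl ⟨Fin.ext h, Fin.ext (by show eidx e + 1 = eidx f + 1; omega)⟩
    constructor
    · rintro ⟨hne, h | h⟩
      · replace h : ∃ u, u ∈ (e : Sym2 (Fin m)) ∧ u ∈ (f : Sym2 (Fin m)) := h
        obtain ⟨u, hu, hv⟩ := h
        rw [mem_eidx_iff] at hu hv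
        have hne' : eidx e ≠ eidx f := fun hh => hne (congrArg Sum.inr (hef.mpr hh))
        exact ⟨by omega, by omega⟩
      · replace h : ∃ u, u ∈ (f : Sym2 (Fin m)) ∧ u ∈ (e : Sym2 (Fin m)) := h
        obtain ⟨u, hu, hv⟩ := h
        rw [mem_eidx_iff] at hu hv
        have hne' : eidx e ≠ eidx f := fun hh => hne (congrArg Sum.inr (hef.mpr hh))
        exact ⟨by omega, by omega⟩
    · rintro ⟨hne, hd⟩
      have hij : eidx e ≠ eidx f := by omega
      refine ⟨fun hh => hij (hef.mp (Sum.inr.inj hh)), Or.inl ?_⟩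
      show ∃ u, u ∈ (e : Sym2 (Fin m)) ∧ u ∈ (f : Sym2 (Fin m))
      by_cases hlt : eidx e < eidx f
      · refine ⟨⟨eidx f, Nat.lt_of_succ_lt (eidx_lt f)⟩, ?_, ?_⟩ <;>
        · rw [mem_eidx_iff]
          show eidx f = _ ∨ eidx f = _
          omega
      · refine ⟨⟨eidx e, Nat.lt_of_succ_lt (eidx_lt e)⟩, ?_, ?_⟩ <;>
        · rw [mem_eidx_iff]
          show eidx e = _ ∨ eidx e = _
          omega

theorem total_graph_path_iso_path_square (m : ℕ) (hm : 1 ≤ m) :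
    Nonempty (totalGraph (SimpleGraph.pathGraph m) ≃g
      graphPow (SimpleGraph.pathGraph (2 * m - 1)) 2) := by
  exact ⟨⟨⟨tfun m, gfun m, gfun_tfun m, tfun_gfun m⟩, fun {a b} => (tot_adj a b).symm⟩⟩
end
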